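/- Let P be an n×n column stochastic matrix with P_{jj} > 0 for all j, let τ̄ ∈ ℕ, and let τ(k, j, i) ∈ {0, …, τ̄} be delay functions with τ(k, j, j) = 0. Then for any k ≥ 0 and any integer ℓ ≥ τ̄ + 1, the word B = P̄[k+ℓ] ⋯ P̄[k+1] of augmented matrices has top-left n×n block B₀₀ (rows 1..n, columns 1..n) satisfying: B₀₀(j, i) > 0 whenever P(j, i) > 0; in particular B₀₀ has strictly positive diagonal entries. -/

import Mathlib

open Matrix Filter

/-- An `N × N` real matrix is column stochastic if all entries are nonnegative and
each column sums to `1`. -/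
def ColStoch {N : Type*} [Fintype N] (A : Matrix N N ℝ) : Prop :=
  (∀ j i, 0 ≤ A j i) ∧ ∀ i, ∑ j, A j i = 1

/-- The augmented `(τ̄+1)n × (τ̄+1)n` matrix `P̄[k]`, indexed by pairs `(r, j)` where
`r ∈ Fin (τ̄+1)` is the block (virtual-delay) index and `j ∈ Fin n` is the node index.
Block column `0` contains the blocks `P_r[k]` (with `P_r[k](j,i) = P(j,i)` if
`τ(k,j,i) = r` and `0` otherwise); the block in block-row `s-1`, block-column `s`
is the identity for `s = 1, …, τ̄`; all other blocks are zero. -/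
def AugMat (n τbar : ℕ) (P : Matrix (Fin n) (Fin n) ℝ)
    (τ : ℕ → Fin n → Fin n → ℕ) (k : ℕ) :
    Matrix (Fin (τbar + 1) × Fin n) (Fin (τbar + 1) × Fin n) ℝ :=
  fun q p =>
    if p.1.val = 0 then (if τ k q.2 p.2 = q.1.val then P q.2 p.2 else 0)
    else if q.1.val + 1 = p.1.val ∧ q.2 = p.2 then 1 else 0

/-- The word `P̄[k+ℓ] ⋯ P̄[k+2] ⬝ P̄[k+1]` of `ℓ` consecutive augmented matrices. -/
def Word (n τbar : ℕ) (P : Matrix (Fin n) (Fin n) ℝ)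
    (τ : ℕ → Fin n → Fin n → ℕ) (k : ℕ) :
    ℕ → Matrix (Fin (τbar + 1) × Fin n) (Fin (τbar + 1) × Fin n) ℝ
  | 0 => 1
  | ℓ + 1 => AugMat n τbar P τ (k + ℓ + 1) * Word n τbar P τ k ℓ

/-- A column stochastic matrix `B` is SIA if its powers `B^m` converge (entrywise)
to a matrix of the form `c ⬝ 𝟙ᵀ` for some nonnegative vector `c`. -/
def IsSIA {N : Type*} [Fintype N] [DecidableEq N] (B : Matrix N N ℝ) : Prop :=
  ColStoch B ∧ ∃ c : N → ℝ, (∀ j, 0 ≤ c j) ∧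
    Tendsto (fun m => B ^ m) atTop (nhds (Matrix.of fun j _ => c j))

lemma augmat_nonneg (n τbar : ℕ) (P : Matrix (Fin n) (Fin n) ℝ) (hP : ColStoch P)
    (τ : ℕ → Fin n → Fin n → ℕ) (k : ℕ) (q p : Fin (τbar + 1) × Fin n) :
    0 ≤ AugMat n τbar P τ k q p := by
  unfold AugMat
  split_ifs <;> first | exact hP.1 _ _ | norm_num

lemma word_nonneg (n τbar : ℕ) (P : Matrix (Fin n) (Fin n) ℝ) (hP : ColStoch P)
    (τ : ℕ → Fin n → Fin n → ℕ) (k : ℕ) :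
    ∀ m (q p : Fin (τbar + 1) × Fin n), 0 ≤ Word n τbar P τ k m q p := by
  intro m
  induction m with
  | zero =>
    intro q p
    simp only [Word]
    rcases eq_or_ne q p with h | h
    · simp [Matrix.one_apply, h]
    · simp [Matrix.one_apply, h]
  | succ m ih =>
    intro q p
    simp only [Word, Matrix.mul_apply]
    exact Finset.sum_nonneg fun x _ =>
      mul_nonneg (augmat_nonneg n τbar P hP τ _ _ _) (ih _ _)

lemma word_split (n τbar : ℕ) (P : Matrix (Fin n) (Fin n) ℝ)
    (τ : ℕ → Fin n → Fin n → ℕ) (k : ℕ) :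
    ∀ a b, Word n τbar P τ k (a + b) =
      Word n τbar P τ (k + b) a * Word n τbar P τ k b := by
  intro a b
  induction a with
  | zero => simp [Word]
  | succ a ih =>
    have h1 : a + 1 + b = (a + b) + 1 := by omega
    rw [h1]
    show AugMat n τbar P τ (k + (a + b) + 1) * Word n τbar P τ k (a + b) = _
    have h2 : k + (a + b) + 1 = (k + b) + a + 1 := by omega
    rw [ih, h2, ← mul_assoc]
    rfl

lemma word_pos_col (n τbar : ℕ) (P : Matrix (Fin n) (Fin n) ℝ) (hP : ColStoch P)
    (hdiag : ∀ j, 0 < P j j)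
    (τ : ℕ → Fin n → Fin n → ℕ) (hτself : ∀ k j, τ k j j = 0) :
    ∀ m k (s : Fin (τbar + 1)) (j : Fin n), s.val ≤ m →
      0 < Word n τbar P τ k m (0, j) (s, j) := by
  intro m
  induction m with
  | zero =>
    intro k s j hs
    have hs0 : s = 0 := by
      ext; simp only [Fin.val_zero]; omega
    subst hs0
    simp [Word, Matrix.one_apply]
  | succ m ih =>
    intro k s j hs
    have hsplit := word_split n τbar P τ k m 1
    have hw1 : Word n τbar P τ k 1 = AugMat n τbar P τ (k + 1) := by
      show AugMat n τbar P τ (k + 0 + 1) * Word n τbar P τ k 0 = _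
      simp [Word]
    rw [show m + 1 = m + 1 from rfl] at hsplit
    rw [hsplit, hw1, Matrix.mul_apply]
    -- choose the witness index
    rcases Nat.eq_zero_or_pos s.val with h0 | hpos
    · -- s = 0, use q = (0, j)
      have hs0 : s = 0 := by ext; simp only [Fin.val_zero]; omega
      subst hs0
      apply Finset.sum_pos'
      · intro x _
        exact mul_nonneg (word_nonneg n τbar P hP τ _ _ _ _)
          (augmat_nonneg n τbar P hP τ _ _ _)
      · refine ⟨((0 : Fin (τbar + 1)), j), Finset.mem_univ _, ?_⟩
        apply mul_pos (ih (k + 1) 0 j (Nat.zero_le _))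
        have : AugMat n τbar P τ (k + 1) (0, j) (0, j) = P j j := by
          simp [AugMat, hτself]
        rw [this]; exact hdiag j
    · -- s.val ≥ 1, use q = (s - 1, j)
      obtain ⟨t, ht⟩ := Nat.exists_eq_succ_of_ne_zero (Nat.pos_iff_ne_zero.mp hpos)
      have htlt : t < τbar + 1 := by omega
      apply Finset.sum_pos'
      · intro x _
        exact mul_nonneg (word_nonneg n τbar P hP τ _ _ _ _)
          (augmat_nonneg n τbar P hP τ _ _ _)
      · refine ⟨((⟨t, htlt⟩ : Fin (τbar + 1)), j), Finset.mem_univ _, ?_⟩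
        apply mul_pos (ih (k + 1) ⟨t, htlt⟩ j (show t ≤ m by omega))
        have : AugMat n τbar P τ (k + 1) (⟨t, htlt⟩, j) (s, j) = 1 := by
          simp only [AugMat]
          rw [if_neg (by simpa using hpos.ne'), if_pos (by simp [ht])]
        rw [this]; norm_num

theorem statement12 (n : ℕ)
    (P : Matrix (Fin n) (Fin n) ℝ) (hP : ColStoch P)
    (hdiag : ∀ j, 0 < P j j)
    (τbar : ℕ) (τ : ℕ → Fin n → Fin n → ℕ)
    (hτle : ∀ k j i, τ k j i ≤ τbar)
    (hτself : ∀ k j, τ k j j = 0)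
    (k ℓ : ℕ) (hℓ : τbar + 1 ≤ ℓ) :
    (∀ j i : Fin n, 0 < P j i → 0 < Word n τbar P τ k ℓ (0, j) (0, i)) ∧
      ∀ j : Fin n, 0 < Word n τbar P τ k ℓ (0, j) (0, j) := by
  have hsplit := word_split n τbar P τ k (ℓ - 1) 1
  have hℓ1 : (ℓ - 1) + 1 = ℓ := by omega
  rw [hℓ1] at hsplit
  have hw1 : Word n τbar P τ k 1 = AugMat n τbar P τ (k + 1) := by
    show AugMat n τbar P τ (k + 0 + 1) * Word n τbar P τ k 0 = _
    simp [Word]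
  constructor
  · intro j i hPji
    rw [hsplit, hw1, Matrix.mul_apply]
    set r := τ (k + 1) j i with hr
    have hrlt : r < τbar + 1 := Nat.lt_succ_of_le (hτle _ _ _)
    apply Finset.sum_pos'
    · intro x _
      exact mul_nonneg (word_nonneg n τbar P hP τ _ _ _ _)
        (augmat_nonneg n τbar P hP τ _ _ _)
    · refine ⟨((⟨r, hrlt⟩ : Fin (τbar + 1)), j), Finset.mem_univ _, ?_⟩
      apply mul_pos
      · exact word_pos_col n τbar P hP hdiag τ hτself (ℓ - 1) (k + 1) ⟨r, hrlt⟩ j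
          (show r ≤ ℓ - 1 by have := hτle (k + 1) j i; omega)
      · have : AugMat n τbar P τ (k + 1) (⟨r, hrlt⟩, j) (0, i) = P j i := by
          simp [AugMat, hr]
        rw [this]; exact hPji
  · intro j
    rw [hsplit, hw1, Matrix.mul_apply]
    apply Finset.sum_pos'
    · intro x _
      exact mul_nonneg (word_nonneg n τbar P hP τ _ _ _ _)
        (augmat_nonneg n τbar P hP τ _ _ _)
    · refine ⟨((0 : Fin (τbar + 1)), j), Finset.mem_univ _, ?_⟩
      apply mul_pos
      · exact word_pos_col n τbar P hP hdiag τ hτself (ℓ - 1) (k + 1) 0 j (Nat.zero_le _)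
      · have : AugMat n τbar P τ (k + 1) (0, j) (0, j) = P j j := by
          simp [AugMat, hτself]
        rw [this]; exact hdiag j
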